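/- The integral 2 ∫₀¹ ∫₀¹ ∫_a¹ ∫₀¹ ∫_{a'}¹ max{0, min{1, b + (b'-b)(a-a'')/(a-a')}} da'' db' da' db da equals 1/6. -/

import Mathlib

open intervalIntegral MeasureTheory

private lemma L1 (b t : ℝ) (hb0 : 0 ≤ b) (hb1 : b ≤ 1) (ht : 1 ≤ t) :
    ∫ x in (0:ℝ)..1, max 0 (min 1 (b + (x - b) * t)) = 1/(2*t) + (t-1)*(1-b)/t := by
  have ht0 : (0:ℝ) < t := lt_of_lt_of_le one_pos ht
  have htne : t ≠ 0 := ne_of_gt ht0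
  set b0 : ℝ := (t-1)*b/t with hb0def
  set b1 : ℝ := (1+(t-1)*b)/t with hb1def
  have h0b0 : 0 ≤ b0 := div_nonneg (mul_nonneg (by linarith) hb0) ht0.le
  have hb0b1 : b0 ≤ b1 := by
    rw [hb0def, hb1def, div_le_div_iff₀ ht0 ht0]; nlinarith
  have hb11 : b1 ≤ 1 := by
    rw [hb1def, div_le_one ht0]; nlinarith
  have hcont : Continuous fun x : ℝ => max 0 (min 1 (b + (x - b) * t)) :=
    continuous_const.max (continuous_const.min
      (continuous_const.add ((continuous_id.sub continuous_const).mul continuous_const)))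
  have hi : ∀ p q : ℝ, IntervalIntegrable (fun x => max 0 (min 1 (b + (x - b) * t))) MeasureTheory.volume p q :=
    fun p q => hcont.intervalIntegrable p q
  have split1 : (∫ x in (0:ℝ)..1, max 0 (min 1 (b + (x - b) * t)))
      = (∫ x in (0:ℝ)..b0, max 0 (min 1 (b + (x - b) * t)))
        + (∫ x in b0..b1, max 0 (min 1 (b + (x - b) * t)))
        + (∫ x in b1..(1:ℝ), max 0 (min 1 (b + (x - b) * t))) := by
    rw [integral_add_adjacent_intervals (hi 0 b0) (hi b0 b1),
      integral_add_adjacent_intervals (hi 0 b1) (hi b1 1)]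
  have p1 : (∫ x in (0:ℝ)..b0, max 0 (min 1 (b + (x - b) * t))) = 0 := by
    rw [integral_congr (g := fun _ => (0:ℝ))]
    · simp
    · intro x hx
      rw [Set.uIcc_of_le h0b0] at hx
      have hx2 := hx.2
      have hv : b + (x - b) * t ≤ 0 := by
        have hbt : b0 * t = (t-1)*b := by rw [hb0def]; exact div_mul_cancel₀ _ htne
        nlinarith
      show max 0 (min 1 (b + (x - b) * t)) = 0
      exact max_eq_left (le_trans (min_le_right _ _) hv)
  have p2 : (∫ x in b0..b1, max 0 (min 1 (b + (x - b) * t))) = 1/(2*t) := by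
    rw [integral_congr (g := fun x => b + (x - b) * t)]
    · have ftc : ∀ x : ℝ, HasDerivAt (fun y : ℝ => b*y + (y-b)^2/(2/t)) (b + (x - b) * t) x := by
        intro x
        have h1 : HasDerivAt (fun y : ℝ => b*y) b x := by
          simpa using (hasDerivAt_id x).const_mul b
        have h2 := (((hasDerivAt_id x).sub_const b).pow 2).div_const (2/t)
        have h2' : HasDerivAt (fun y : ℝ => (y-b)^2/(2/t)) ((x-b)*t) x := by
          refine h2.congr_deriv ?_
          simp only [id]; field_simp; ring
        exact h1.add h2'
      rw [integral_eq_sub_of_hasDerivAt (fun x _ => ftc x)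
        ((continuous_const.add ((continuous_id.sub continuous_const).mul continuous_const)).intervalIntegrable _ _)]
      rw [hb0def, hb1def]; field_simp; ring
    · intro x hx
      rw [Set.uIcc_of_le hb0b1] at hx
      have hlo : 0 ≤ b + (x - b) * t := by
        have hbt : b0 * t = (t-1)*b := by rw [hb0def]; exact div_mul_cancel₀ _ htne
        nlinarith [hx.1]
      have hhi : b + (x - b) * t ≤ 1 := by
        have hbt : b1 * t = 1 + (t-1)*b := by rw [hb1def]; exact div_mul_cancel₀ _ htne
        nlinarith [hx.2]
      show max 0 (min 1 (b + (x - b) * t)) = b + (x - b) * t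
      rw [min_eq_right hhi, max_eq_right hlo]
  have p3 : (∫ x in b1..(1:ℝ), max 0 (min 1 (b + (x - b) * t))) = 1 - b1 := by
    rw [integral_congr (g := fun _ => (1:ℝ))]
    · simp
    · intro x hx
      rw [Set.uIcc_of_le hb11] at hx
      have hv : 1 ≤ b + (x - b) * t := by
        have hbt : b1 * t = 1 + (t-1)*b := by rw [hb1def]; exact div_mul_cancel₀ _ htne
        nlinarith [hx.1]
      show max 0 (min 1 (b + (x - b) * t)) = 1
      rw [min_eq_left hv]; exact max_eq_right zero_le_one
  rw [split1, p1, p2, p3, hb1def]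
  field_simp; ring

private lemma swap1 (a b a' : ℝ) (h : a' ≤ 1) :
    (∫ b' in (0:ℝ)..1, ∫ a'' in a'..1, max 0 (min 1 (b + (b' - b) * (a - a'') / (a - a'))))
      = ∫ a'' in a'..1, ∫ b' in (0:ℝ)..1, max 0 (min 1 (b + (b' - b) * (a - a'') / (a - a'))) := by
  have hc : Continuous (Function.uncurry fun b' a'' : ℝ =>
      max 0 (min 1 (b + (b' - b) * (a - a'') / (a - a')))) := by
    apply continuous_const.max
    apply continuous_const.min
    exact continuous_const.add
      (((continuous_fst.sub continuous_const).mul (continuous_const.sub continuous_snd)).div_const _)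
  have hint : Integrable (Function.uncurry fun b' a'' : ℝ =>
      max 0 (min 1 (b + (b' - b) * (a - a'') / (a - a'))))
      ((volume.restrict (Set.Ioc (0:ℝ) 1)).prod (volume.restrict (Set.Ioc a' 1))) := by
    rw [Measure.prod_restrict]
    exact (hc.continuousOn.integrableOn_compact (isCompact_Icc.prod isCompact_Icc)).mono_set
      (Set.prod_mono Set.Ioc_subset_Icc_self Set.Ioc_subset_Icc_self)
  rw [integral_of_le (zero_le_one), integral_of_le h]
  simp_rw [integral_of_le h, integral_of_le (zero_le_one)]
  exact integral_integral_swap hint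

private lemma L2 (a b a' : ℝ) (ha : a < a') (h1 : a' ≤ 1) (hb0 : 0 ≤ b) (hb1 : b ≤ 1) :
    (∫ b' in (0:ℝ)..1, ∫ a'' in a'..1, max 0 (min 1 (b + (b' - b) * (a - a'') / (a - a'))))
      = (1-b)*(1-a') + (b-1/2)*((a'-a)*(Real.log (1-a) - Real.log (a'-a))) := by
  have hc : (0:ℝ) < a' - a := sub_pos.mpr ha
  have hcne : a' - a ≠ 0 := ne_of_gt hc
  rw [swap1 a b a' h1]
  rw [integral_congr (g := fun x => ((a'-a)/2)*(x-a)⁻¹ + (1-b)*(1-(a'-a)*(x-a)⁻¹))]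
  · have ftc : ∀ x ∈ Set.uIcc a' 1, HasDerivAt
        (fun y : ℝ => ((a'-a)/2)*Real.log (y-a) + (1-b)*(y - (a'-a)*Real.log (y-a)))
        (((a'-a)/2)*(x-a)⁻¹ + (1-b)*(1-(a'-a)*(x-a)⁻¹)) x := by
      intro x hx
      rw [Set.uIcc_of_le h1] at hx
      have hxa : 0 < x - a := by linarith [hx.1]
      have hlog : HasDerivAt (fun y : ℝ => Real.log (y - a)) (x - a)⁻¹ x := by
        have := (Real.hasDerivAt_log (ne_of_gt hxa)).comp x ((hasDerivAt_id x).sub_const a)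
        simpa [Function.comp_def] using this
      have h1' := (hlog.const_mul ((a'-a)/2))
      have h2' := ((hasDerivAt_id x).sub (hlog.const_mul (a'-a))).const_mul (1-b)
      have := h1'.add h2'
      exact this
    have hcont : ContinuousOn
        (fun x : ℝ => ((a'-a)/2)*(x-a)⁻¹ + (1-b)*(1-(a'-a)*(x-a)⁻¹)) (Set.uIcc a' 1) := by
      have hinv : ContinuousOn (fun x : ℝ => (x-a)⁻¹) (Set.uIcc a' 1) := by
        apply ContinuousOn.inv₀ ((continuous_id.sub continuous_const).continuousOn)
        intro x hx
        rw [Set.uIcc_of_le h1] at hx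
        have : 0 < x - a := by linarith [hx.1]
        exact ne_of_gt this
      exact (continuousOn_const.mul hinv).add
        (continuousOn_const.mul (continuousOn_const.sub (continuousOn_const.mul hinv)))
    rw [integral_eq_sub_of_hasDerivAt ftc (hcont.intervalIntegrable)]
    ring
  · intro x hx
    rw [Set.uIcc_of_le h1] at hx
    have hxa' : a' ≤ x := hx.1
    have hxa : 0 < x - a := by linarith
    set t : ℝ := (x - a)/(a' - a) with htdef
    have ht1 : 1 ≤ t := by
      rw [htdef, le_div_iff₀ hc]; linarith
    have ht0 : t ≠ 0 := by positivity
    have hrw : ∀ b' : ℝ, (b' - b) * (a - x) / (a - a') = (b' - b) * t := by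
      intro b'
      rw [mul_div_assoc, htdef]
      congr 1
      rw [show a - x = -(x - a) by ring, show a - a' = -(a' - a) by ring, neg_div_neg_eq]
    show (∫ b' in (0:ℝ)..1, max 0 (min 1 (b + (b' - b) * (a - x) / (a - a')))) = _
    simp_rw [hrw]
    rw [L1 b t hb0 hb1 ht1]
    rw [htdef]
    field_simp

private lemma contK (a : ℝ) : Continuous fun x : ℝ => (x - a)*(Real.log (1-a) - Real.log (x-a)) := by
  have h : Continuous fun x : ℝ => (x-a)*Real.log (1-a) - (x-a)*Real.log (x-a) :=
    ((continuous_id.sub continuous_const).mul continuous_const).sub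
      (Real.continuous_mul_log.comp (continuous_id.sub continuous_const))
  convert h using 1
  ext x; ring

private lemma K (a : ℝ) (ha : a ≤ 1) :
    ∫ x in a..1, (x - a)*(Real.log (1-a) - Real.log (x-a)) = (1-a)^2/4 := by
  set F : ℝ → ℝ := fun x =>
    (x-a)^2/2*Real.log (1-a) - ((x-a)*((x-a)*Real.log (x-a))/2 - (x-a)^2/4) with hF
  have hFcont : Continuous F := by
    apply Continuous.sub
    · exact (((continuous_id.sub continuous_const).pow 2).div_const 2).mul continuous_const
    · exact (((continuous_id.sub continuous_const).mul
        (Real.continuous_mul_log.comp (continuous_id.sub continuous_const))).div_const 2).sub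
        (((continuous_id.sub continuous_const).pow 2).div_const 4)
  have hderiv : ∀ x ∈ Set.Ioo a 1, HasDerivAt F ((x - a)*(Real.log (1-a) - Real.log (x-a))) x := by
    intro x hx
    have hxa : 0 < x - a := by linarith [hx.1]
    have hlog : HasDerivAt (fun y : ℝ => Real.log (y - a)) (x - a)⁻¹ x := by
      have := (Real.hasDerivAt_log (ne_of_gt hxa)).comp x ((hasDerivAt_id x).sub_const a)
      simpa [Function.comp_def] using this
    have hid : HasDerivAt (fun y : ℝ => y - a) 1 x := (hasDerivAt_id x).sub_const a
    have hsq : HasDerivAt (fun y : ℝ => (y-a)^2) (2*(x-a)) x := by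
      have := (hid.pow 2); simpa [Pi.pow_def] using this
    have hml : HasDerivAt (fun y : ℝ => (y-a)*Real.log (y-a))
        (Real.log (x-a) + 1) x := by
      have h2 : HasDerivAt (fun y : ℝ => (y-a)*Real.log (y-a))
          (1 * Real.log (x-a) + (x-a) * (x-a)⁻¹) x := hid.mul hlog
      convert h2 using 1
      field_simp
    have hbig : HasDerivAt F
        ((2*(x-a))/2*Real.log (1-a) -
          ((1*((x-a)*Real.log (x-a)) + (x-a)*(Real.log (x-a)+1))/2 - (2*(x-a))/4)) x := by
      exact ((hsq.div_const 2).mul_const _).sub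
        (((hid.mul hml).div_const 2).sub (hsq.div_const 4))
    convert hbig using 1
    ring
  rw [integral_eq_sub_of_hasDeriv_right_of_le ha hFcont.continuousOn
    (fun x hx => (hderiv x hx).hasDerivWithinAt) ((contK a).intervalIntegrable _ _)]
  rw [hF]
  simp [Real.log_zero]
  ring

private lemma L3 (a b : ℝ) (ha0 : 0 ≤ a) (ha1 : a ≤ 1) (hb0 : 0 ≤ b) (hb1 : b ≤ 1) :
    (∫ a' in a..1, ∫ b' in (0:ℝ)..1, ∫ a'' in a'..1,
        max 0 (min 1 (b + (b' - b) * (a - a'') / (a - a'))))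
      = (1-b)*(1-a)^2/2 + (b-1/2)*(1-a)^2/4 := by
  rw [intervalIntegral.integral_congr_ae (g := fun a' =>
      (1-b)*(1-a') + (b-1/2)*((a'-a)*(Real.log (1-a) - Real.log (a'-a))))]
  · have i1 : IntervalIntegrable (fun a' : ℝ => (1-b)*(1-a')) volume a 1 :=
      (continuous_const.mul (continuous_const.sub continuous_id)).intervalIntegrable _ _
    have i2 : IntervalIntegrable
        (fun a' : ℝ => (b-1/2)*((a'-a)*(Real.log (1-a) - Real.log (a'-a)))) volume a 1 :=
      (continuous_const.mul (contK a)).intervalIntegrable _ _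
    rw [integral_add i1 i2, intervalIntegral.integral_const_mul, intervalIntegral.integral_const_mul, K a ha1]
    have ftc : ∀ x ∈ Set.uIcc a 1, HasDerivAt (fun y : ℝ => y - y^2/2) (1 - x) x := by
      intro x _
      have := (hasDerivAt_id x).sub (((hasDerivAt_id x).pow 2).div_const 2)
      convert this using 1 <;> first
      | rfl
      | (ext y; simp only [id_eq]; ring)
      | (simp only [id_eq]; ring)
    rw [integral_eq_sub_of_hasDerivAt ftc
      ((continuous_const.sub continuous_id).intervalIntegrable _ _)]
    ring
  · filter_upwards with x hx
    rw [Set.uIoc_of_le ha1] at hx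
    exact L2 a b x hx.1 hx.2 hb0 hb1

private lemma L4 (a : ℝ) (ha0 : 0 ≤ a) (ha1 : a ≤ 1) :
    (∫ b in (0:ℝ)..1, ∫ a' in a..1, ∫ b' in (0:ℝ)..1, ∫ a'' in a'..1,
        max 0 (min 1 (b + (b' - b) * (a - a'') / (a - a'))))
      = (1-a)^2/4 := by
  rw [integral_congr (g := fun b => (1-b)*(1-a)^2/2 + (b-1/2)*(1-a)^2/4)]
  · have ftc : ∀ x ∈ Set.uIcc (0:ℝ) 1, HasDerivAt
        (fun y : ℝ => (y - y^2/2)*(1-a)^2/2 + (y^2/2 - y/2)*(1-a)^2/4)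
        ((1-x)*(1-a)^2/2 + (x-1/2)*(1-a)^2/4) x := by
      intro x _
      have h1 := ((hasDerivAt_id x).sub (((hasDerivAt_id x).pow 2).div_const 2)).mul_const ((1-a)^2/2)
      have h2 := ((((hasDerivAt_id x).pow 2).div_const 2).sub ((hasDerivAt_id x).div_const 2)).mul_const ((1-a)^2/4)
      have := h1.add h2
      refine (this.congr_deriv ?_).congr_of_eventuallyEq (Filter.Eventually.of_forall fun y => ?_)
      · simp only [id]; ring
      · simp only [id, Pi.add_apply, Pi.sub_apply, Pi.pow_apply]; ring
    rw [integral_eq_sub_of_hasDerivAt ftc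
      (((((continuous_const.sub continuous_id).mul continuous_const).div_const 2).add
        ((((continuous_id.sub continuous_const).mul continuous_const)).div_const 4)).intervalIntegrable _ _)]
    norm_num
    ring
  · intro b hb
    rw [Set.uIcc_of_le zero_le_one] at hb
    exact L3 a b ha0 ha1 hb.1 hb.2

/-- The integral `2 ∫₀¹∫₀¹∫_a¹∫₀¹∫_{a'}¹ max{0, min{1, b + (b'-b)(a-a'')/(a-a')}}`
equals `1/6`. -/
theorem stmt_8 :
    2 * ∫ a in (0:ℝ)..1, ∫ b in (0:ℝ)..1, ∫ a' in a..1, ∫ b' in (0:ℝ)..1,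
        ∫ a'' in a'..1, max 0 (min 1 (b + (b' - b) * (a - a'') / (a - a')))
      = 1 / 6 := by
  rw [integral_congr (g := fun a => (1-a)^2/4)]
  · have ftc : ∀ x ∈ Set.uIcc (0:ℝ) 1, HasDerivAt
        (fun y : ℝ => -(1-y)^3/12) ((1-x)^2/4) x := by
      intro x _
      have := (((hasDerivAt_id x).const_sub 1).pow 3).div_const (-12)
      convert this using 1 <;> first
      | rfl
      | (ext y; simp only [id_eq, Pi.pow_apply]; ring)
      | (simp only [id_eq]; ring)
    rw [integral_eq_sub_of_hasDerivAt ftc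
      ((((continuous_const.sub continuous_id).pow 2).div_const 4).intervalIntegrable _ _)]
    norm_num
  · intro a ha
    rw [Set.uIcc_of_le zero_le_one] at ha
    exact L4 a ha.1 ha.2
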